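/- Let n ≥ 1, let u, v ∈ ℝ^n, and let N0, H0, H1, θ be real numbers with H0 > 0, H1 > 0, θ > 0 and H0 + (1+θ)H1 < N0. Assume ‖u+v‖^2 > 0 and ‖u+v‖^2 ≥ ((H0+H1)(N0 - (H0+H1)) / (H0(N0 - H0))) · ‖u‖^2. Then ‖u+(1+θ)v‖^2 · (H0+H1)(N0 - (H0+H1)) > ‖u+v‖^2 · (H0+(1+θ)H1)(N0 - (H0+(1+θ)H1)); equivalently, ‖u+(1+θ)v‖^2 / ((H0+(1+θ)H1)(N0 - (H0+(1+θ)H1))) > ‖u+v‖^2 / ((H0+H1)(N0 - (H0+H1))). -/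

import Mathlib

/-- Key lemma in the proof of Proposition 1: if adding the set of points with
centered histogram `v` (mass `H1`) to the cluster with centered histogram `u`
(mass `H0`) does not decrease the discretized region-based Sobol' index, then
additionally adding a perfectly correlated set (factor `θ`) strictly increases it. -/
theorem stmt15 (n : ℕ) (hn : 1 ≤ n) (u v : EuclideanSpace ℝ (Fin n))
    (N0 H0 H1 θ : ℝ) (hH0 : 0 < H0) (hH1 : 0 < H1) (hθ : 0 < θ)
    (hN : H0 + (1 + θ) * H1 < N0)
    (huv : 0 < ‖u + v‖ ^ 2)
    (h : ‖u + v‖ ^ 2 ≥ ((H0 + H1) * (N0 - (H0 + H1)) / (H0 * (N0 - H0))) * ‖u‖ ^ 2) :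
    ‖u + (1 + θ) • v‖ ^ 2 * ((H0 + H1) * (N0 - (H0 + H1))) >
      ‖u + v‖ ^ 2 * ((H0 + (1 + θ) * H1) * (N0 - (H0 + (1 + θ) * H1))) ∧
    ‖u + (1 + θ) • v‖ ^ 2 / ((H0 + (1 + θ) * H1) * (N0 - (H0 + (1 + θ) * H1))) >
      ‖u + v‖ ^ 2 / ((H0 + H1) * (N0 - (H0 + H1))) := by
  have h1θ : (0:ℝ) < 1 + θ := by linarith
  have hg0 : 0 < H0 * (N0 - H0) := by
    have : H0 < N0 := by nlinarith [mul_pos h1θ hH1]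
    nlinarith
  have hg1 : 0 < (H0 + H1) * (N0 - (H0 + H1)) := by
    have : H0 + H1 < N0 := by nlinarith [mul_pos hθ hH1]
    nlinarith
  have hgθ : 0 < (H0 + (1 + θ) * H1) * (N0 - (H0 + (1 + θ) * H1)) := by
    have h2 : 0 < H0 + (1 + θ) * H1 := by positivity
    nlinarith
  -- turn the ratio hypothesis into a product inequality
  have hE : ((H0 + H1) * (N0 - (H0 + H1))) * ‖u‖ ^ 2 ≤ ‖u + v‖ ^ 2 * (H0 * (N0 - H0)) := by
    rw [ge_iff_le, div_mul_eq_mul_div, div_le_iff₀ hg0] at h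
    linarith
  -- expand the norms
  have e1 : ‖u + v‖ ^ 2 = ‖u‖ ^ 2 + 2 * (inner ℝ u v : ℝ) + ‖v‖ ^ 2 :=
    norm_add_sq_real u v
  have e2 : ‖u + (1 + θ) • v‖ ^ 2
      = ‖u‖ ^ 2 + 2 * ((1 + θ) * (inner ℝ u v : ℝ)) + (1 + θ) ^ 2 * ‖v‖ ^ 2 := by
    rw [norm_add_sq_real, real_inner_smul_right, norm_smul]
    rw [Real.norm_eq_abs, abs_of_pos h1θ]
    ring
  have hcn : (0:ℝ) ≤ ‖v‖ ^ 2 := by positivity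
  rw [e1] at hE huv ⊢
  rw [e2]
  have key : (‖u‖^2 + 2 * ((1 + θ) * (inner ℝ u v : ℝ)) + (1 + θ)^2 * ‖v‖ ^ 2) * ((H0 + H1) * (N0 - (H0 + H1)))
      - (‖u‖^2 + 2 * (inner ℝ u v : ℝ) + ‖v‖ ^ 2) * ((H0 + (1 + θ) * H1) * (N0 - (H0 + (1 + θ) * H1)))
      = θ * (1 + θ) * (‖v‖ ^ 2 * ((H0 + H1) * (N0 - (H0 + H1))) + H1^2 * (‖u‖^2 + 2 * (inner ℝ u v : ℝ) + ‖v‖ ^ 2))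
        + θ * ((‖u‖^2 + 2 * (inner ℝ u v : ℝ) + ‖v‖ ^ 2) * (H0 * (N0 - H0))
              - ((H0 + H1) * (N0 - (H0 + H1))) * ‖u‖^2) := by ring
  have hpos : 0 < (‖u‖^2 + 2 * ((1 + θ) * (inner ℝ u v : ℝ)) + (1 + θ)^2 * ‖v‖ ^ 2) * ((H0 + H1) * (N0 - (H0 + H1)))
      - (‖u‖^2 + 2 * (inner ℝ u v : ℝ) + ‖v‖ ^ 2) * ((H0 + (1 + θ) * H1) * (N0 - (H0 + (1 + θ) * H1))) := by
    rw [key]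
    have t1 : 0 ≤ θ * (1 + θ) * (‖v‖ ^ 2 * ((H0 + H1) * (N0 - (H0 + H1)))) := by positivity
    have t2 : 0 < θ * (1 + θ) * (H1^2 * (‖u‖^2 + 2 * (inner ℝ u v : ℝ) + ‖v‖ ^ 2)) := by
      have := mul_pos (mul_pos hθ h1θ) (mul_pos (pow_pos hH1 2) huv)
      linarith [this]
    have t3 : 0 ≤ θ * ((‖u‖^2 + 2 * (inner ℝ u v : ℝ) + ‖v‖ ^ 2) * (H0 * (N0 - H0))
        - ((H0 + H1) * (N0 - (H0 + H1))) * ‖u‖^2) := by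
      have := mul_nonneg hθ.le (sub_nonneg.2 hE)
      linarith [this]
    nlinarith [t1, t2, t3]
  constructor
  · linarith
  · rw [gt_iff_lt, div_lt_div_iff₀ hg1 hgθ]
    linarith
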